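/- Per-coordinate perspective relaxation identity: let λ0 > 0, λ2 > 0, M > 0 and β ∈ ℝ with |β| ≤ M. Then the infimum of λ0 z + λ2 s over all (z, s) with z ∈ [0, 1], s ≥ 0, β² ≤ s·z, and |β| ≤ M·z, equals ψ(β), where ψ(β) = λ0 + λ2β² if √(λ2/λ0)|β| ≥ 1; ψ(β) = 2√(λ0λ2)|β| if |β|/M ≤ √(λ2/λ0)|β| ≤ 1; and ψ(β) = (λ0/M + λ2M)|β| if √(λ0/λ2) > M. -/

import Mathlib

set_option maxHeartbeats 1000000 in
/-- Per-coordinate perspective relaxation identity: for `|β| ≤ M`, the infimum of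
`λ0 z + λ2 s` over all `(z, s)` with `z ∈ [0,1]`, `s ≥ 0`, `β² ≤ s·z`, `|β| ≤ M·z`,
equals `ψ(β)`, where `ψ(β) = λ0 + λ2 β²` if `√(λ2/λ0)|β| ≥ 1`;
`ψ(β) = 2√(λ0λ2)|β|` if `|β|/M ≤ √(λ2/λ0)|β| ≤ 1`; and
`ψ(β) = (λ0/M + λ2 M)|β|` if `√(λ0/λ2) > M`. -/
theorem perspective_relaxation_identity (lam0 lam2 M β : ℝ) (hlam0 : 0 < lam0)
    (hlam2 : 0 < lam2) (hM : 0 < M) (hβM : |β| ≤ M) :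
    IsLeast ((fun q : ℝ × ℝ => lam0 * q.1 + lam2 * q.2) ''
        {q : ℝ × ℝ | q.1 ∈ Set.Icc (0 : ℝ) 1 ∧ 0 ≤ q.2 ∧ β ^ 2 ≤ q.2 * q.1 ∧
          |β| ≤ M * q.1})
      (if 1 ≤ Real.sqrt (lam2 / lam0) * |β| then lam0 + lam2 * β ^ 2
       else if |β| / M ≤ Real.sqrt (lam2 / lam0) * |β| then
         2 * Real.sqrt (lam0 * lam2) * |β|
       else (lam0 / M + lam2 * M) * |β|) := by
  obtain ⟨r, hrdef⟩ : ∃ r, Real.sqrt (lam2 / lam0) = r := ⟨_, rfl⟩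
  have hr0 : 0 ≤ r := hrdef ▸ Real.sqrt_nonneg _
  have hr2 : r ^ 2 = lam2 / lam0 := hrdef ▸ Real.sq_sqrt (by positivity)
  have hl2 : lam2 = lam0 * r ^ 2 := by field_simp at hr2; linarith [hr2]
  have hrpos : 0 < r := by
    rcases hr0.lt_or_eq with h | h
    · exact h
    · exfalso
      have := div_pos hlam2 hlam0
      rw [← h] at hr2; simp at hr2; linarith [hr2 ▸ this]
  have hsqrt : Real.sqrt (lam0 * lam2) = lam0 * r := by
    rw [show lam0 * lam2 = (lam0 * r) ^ 2 by nlinarith [hr2]]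
    exact Real.sqrt_sq (by positivity)
  have ha0 : 0 ≤ |β| := abs_nonneg β
  have hab : |β| ^ 2 = β ^ 2 := sq_abs β
  rw [hrdef, hsqrt]
  split_ifs with h1 h2
  · -- case 1 : 1 ≤ r |β|
    have hkey : lam0 ≤ lam2 * β ^ 2 := by
      nlinarith [mul_le_mul h1 h1 (by norm_num : (0:ℝ) ≤ 1) (by positivity), hr2]
    constructor
    · exact ⟨(1, β ^ 2), ⟨⟨by norm_num, by norm_num⟩, by positivity, by norm_num, by
        simpa using hβM⟩, by norm_num⟩
    · rintro y ⟨⟨z, s⟩, ⟨⟨hz0, hz1⟩, hs0, hβs, hβz⟩, rfl⟩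
      simp only at *
      have hzpos : 0 < z := by
        nlinarith [mul_le_mul_of_nonneg_left hβz hr0, mul_pos hrpos hM]
      have hq : 0 ≤ lam2 * β ^ 2 - lam0 * z := by nlinarith
      nlinarith [mul_le_mul_of_nonneg_left hβs hlam2.le,
        mul_nonneg (sub_nonneg.mpr hz1) hq, hzpos]
  · -- case 2
    push_neg at h1
    constructor
    · refine ⟨(r * |β|, |β| / r), ⟨⟨by positivity, le_of_lt h1⟩, by positivity, ?_, ?_⟩, ?_⟩
      · have : |β| / r * (r * |β|) = β ^ 2 := by
          field_simp
          linear_combination hab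
        rw [this]
      · calc |β| = M * (|β| / M) := by field_simp
          _ ≤ M * (r * |β|) := mul_le_mul_of_nonneg_left h2 (le_of_lt hM)
      · show lam0 * (r * |β|) + lam2 * (|β| / r) = 2 * (lam0 * r) * |β|
        field_simp
        linear_combination |β| * hl2
    · rintro y ⟨⟨z, s⟩, ⟨⟨hz0, hz1⟩, hs0, hβs, hβz⟩, rfl⟩
      simp only at *
      have hprod : (lam0 * r * |β|) ^ 2 ≤ (lam0 * z) * (lam2 * s) := by
        have heq : (lam0 * r * |β|) ^ 2 = lam0 * lam2 * β ^ 2 := by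
          rw [mul_pow, mul_pow, hab, hl2]; ring
        rw [heq]
        nlinarith [mul_le_mul_of_nonneg_left hβs (mul_pos hlam0 hlam2).le]
      have hc0 : (0:ℝ) ≤ lam0 * r * |β| := by positivity
      have hA : (0:ℝ) ≤ lam0 * z := by positivity
      have hB : (0:ℝ) ≤ lam2 * s := by positivity
      nlinarith [sq_nonneg (lam0 * z - lam2 * s), hprod, hc0, hA, hB,
        mul_nonneg hA hB, sq_nonneg (lam0 * z + lam2 * s - 2 * (lam0 * r * |β|))]
  · -- case 3
    push_neg at h1 h2
    have hbpos : 0 < |β| := by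
      by_contra h
      push_neg at h
      have hz : |β| = 0 := le_antisymm h ha0
      rw [hz] at h2; simp at h2
    have hrM : r * M < 1 := by
      have h3 := mul_lt_mul_of_pos_right h2 hM
      rw [div_mul_cancel₀ _ (ne_of_gt hM)] at h3
      nlinarith [h3, hbpos]
    have hM2 : lam2 * M ^ 2 < lam0 := by
      have h5 : r * M * (r * M) < 1 * 1 :=
        mul_lt_mul'' hrM hrM (by positivity) (by positivity)
      calc lam2 * M ^ 2 = lam0 * (r * M * (r * M)) := by rw [hl2]; ring
        _ < lam0 * (1 * 1) := by exact mul_lt_mul_of_pos_left h5 hlam0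
        _ = lam0 := by ring
    constructor
    · refine ⟨(|β| / M, M * |β|), ⟨⟨by positivity, by rw [div_le_one hM]; exact hβM⟩,
        by positivity, ?_, ?_⟩, ?_⟩
      · have : M * |β| * (|β| / M) = β ^ 2 := by
          field_simp
          linear_combination hab
        rw [this]
      · have : M * (|β| / M) = |β| := by field_simp
        rw [this]
      · show lam0 * (|β| / M) + lam2 * (M * |β|) = (lam0 / M + lam2 * M) * |β|
        field_simp
    · rintro y ⟨⟨z, s⟩, ⟨⟨hz0, hz1⟩, hs0, hβs, hβz⟩, rfl⟩
      simp only at *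
      have hzpos : 0 < z := by nlinarith
      rw [div_add' _ _ _ (ne_of_gt hM), div_mul_eq_mul_div, div_le_iff₀ hM]
      have hls : lam2 * M * |β| ≤ lam0 * z := by
        nlinarith [mul_le_mul_of_nonneg_left hβz hlam2.le]
      nlinarith [mul_nonneg (sub_nonneg.mpr hβz) (sub_nonneg.mpr hls), hβs,
        mul_pos hlam2 hzpos, mul_le_mul_of_nonneg_left hβs hlam2.le]
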